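/- Let α_lo, α_up : ℝ≥0 → ℝ≥0 be strictly increasing continuous bijections with α_lo(s) ≤ α_up(s), and T : R → ℝ≥0 satisfy α_lo(|r - r_d|) ≤ T(r) ≤ α_up(|r - r_d|) for all r ∈ R. Let λ : ℕ → ℝ≥0 satisfy λ(N) ≥ N for all N, and suppose V_N(x) = J_N(x) + λ(N)·T(r_N(x)) with J_N(x) ≥ 0 and V_N(x) ≤ W for all N ≥ N̄ and x in a set S (W a uniform constant). Then for every κ > 0 there exists N_κ such that for all N ≥ N_κ and all x ∈ S, |r_N(x) - r_d| < κ. That is, r_N(x) → r_d uniformly on S as N → ∞. -/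

import Mathlib

open NNReal

/-- Uniform convergence of the optimal artificial reference: if the offset cost is
sandwiched by `K∞`-functions of the distance to `r_d`, the scaling satisfies
`λ(N) ≥ N`, and the value function is uniformly bounded on `S`, then
`r_N(x) → r_d` uniformly on `S` as `N → ∞`. -/
theorem uniform_convergence_artificial_reference {α β : Type*} [MetricSpace β]
    (rd : β)
    (αlo αup : ℝ≥0 → ℝ≥0)
    (hlo_mono : StrictMono αlo) (hlo_cont : Continuous αlo)
    (hlo_bij : Function.Bijective αlo)
    (hup_mono : StrictMono αup) (hup_cont : Continuous αup)
    (hup_bij : Function.Bijective αup)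
    (hle : ∀ s, αlo s ≤ αup s)
    (T : β → ℝ)
    (hT : ∀ r, (αlo (nndist r rd) : ℝ) ≤ T r ∧ T r ≤ (αup (nndist r rd) : ℝ))
    (lam : ℕ → ℝ) (hlam_nn : ∀ N, 0 ≤ lam N) (hlam : ∀ N : ℕ, (N : ℝ) ≤ lam N)
    (S : Set α) (J V : ℕ → α → ℝ) (rN : ℕ → α → β)
    (Nbar : ℕ) (W : ℝ)
    (hJ : ∀ N x, 0 ≤ J N x)
    (hV : ∀ N x, V N x = J N x + lam N * T (rN N x))
    (hW : ∀ N, Nbar ≤ N → ∀ x ∈ S, V N x ≤ W) :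
    ∀ κ > (0:ℝ), ∃ Nκ : ℕ, ∀ N, Nκ ≤ N → ∀ x ∈ S, dist (rN N x) rd < κ := by
  intro κ hκ
  set c : ℝ≥0 := αlo κ.toNNReal with hc
  have hc_pos : (0:ℝ) < c := by
    have h0 : αlo 0 = 0 := by
      obtain ⟨s, hs⟩ := hlo_bij.surjective 0
      have := hlo_mono.monotone (zero_le : (0:ℝ≥0) ≤ s)
      rw [hs] at this
      exact le_antisymm this zero_le
    have : αlo 0 < αlo κ.toNNReal := hlo_mono (by simpa using hκ)
    rw [h0] at this
    exact_mod_cast this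
  obtain ⟨M, hM⟩ := exists_nat_gt (W / c)
  refine ⟨max Nbar M, fun N hN x hx => ?_⟩
  by_contra hcon
  push_neg at hcon
  have hdist : κ.toNNReal ≤ nndist (rN N x) rd := by
    rw [← NNReal.coe_le_coe]
    simpa [Real.coe_toNNReal _ hκ.le] using hcon
  have hTge : (c:ℝ) ≤ T (rN N x) :=
    le_trans (by exact_mod_cast hlo_mono.monotone hdist) (hT _).1
  have hVW := hW N (le_trans (le_max_left _ _) hN) x hx
  have hNM : (M:ℝ) ≤ lam N := le_trans (by exact_mod_cast le_trans (le_max_right _ _) hN) (hlam N)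
  have hVge : lam N * c ≤ V N x := by
    rw [hV]
    have := mul_le_mul_of_nonneg_left hTge (hlam_nn N)
    linarith [hJ N x]
  have : W < M * c := (div_lt_iff₀ hc_pos).mp hM
  have : (M:ℝ) * c ≤ lam N * c := mul_le_mul_of_nonneg_right hNM hc_pos.le
  linarith
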